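/- Soundness of the Dialectica induction rule (ind): Let X, Y be types, P : ℕ → X → Y → Prop, a : ℕ → X → X, α : ℕ → X → Y → Y. Suppose that for every n : ℕ, the Dialectica triple P n ⟨a n | α n⟩ P (n+1) holds, i.e. for all x : X and v : Y, P n x (α n x v) implies P (n+1) (a n x) v. Define the forward iterate b : X → ℕ → X by b y 0 = y and b y (n+1) = a n (b y n); and for fixed y : X, n : ℕ, v : Y define the backward sequence β : ℕ → Y by β 0 = v and β (z+1) = α (n - z - 1) (b y (n - z - 1)) (β z). Then for all y : X, n : ℕ, v : Y: P 0 y (β n) implies P n (b y n) v. -/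
import Mathlib

/-- Soundness of the Dialectica induction rule (ind): the forward iterate `b`
realizes the System T recursor applied to the step functions `a n`, and the
backward sequence `β` realizes the backward recursor `rec*`. -/
theorem dialectica_ind {X Y : Type*}
    (P : ℕ → X → Y → Prop) (a : ℕ → X → X) (α : ℕ → X → Y → Y)
    (hstep : ∀ (n : ℕ) (x : X) (v : Y), P n x (α n x v) → P (n + 1) (a n x) v)
    (b : X → ℕ → X)
    (hb0 : ∀ y, b y 0 = y)
    (hbs : ∀ y n, b y (n + 1) = a n (b y n)) :
    ∀ (y : X) (n : ℕ) (v : Y) (β : ℕ → Y),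
      β 0 = v →
      (∀ z, β (z + 1) = α (n - z - 1) (b y (n - z - 1)) (β z)) →
      P 0 y (β n) → P n (b y n) v := by
  intro y n v β h0 hs h
  have key : ∀ k, k ≤ n → P (n - k) (b y (n - k)) (β k) → P n (b y n) (β 0) := by
    intro k
    induction k with
    | zero => intro _ hk; simpa using hk
    | succ k ih =>
      intro hkn hk
      apply ih (le_of_lt (Nat.lt_of_succ_le hkn))
      have hnk : n - k = (n - k - 1) + 1 := by omega
      rw [hnk, hbs]
      apply hstep
      rw [hs k] at hk
      have : n - k - 1 = n - (k + 1) := by omega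
      rw [this]
      exact hk
  have := key n le_rfl (by simpa [hb0] using h)
  rwa [h0] at this
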